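/- Let Z = [B A]Γ with Γ ∈ ℝ^{(m+n)×T} full row rank, and let Γ_Δ = Γ + Δ_Γ. If G satisfies Γ_Δ G = [Kᵀ I_n]ᵀ (stacking K ∈ ℝ^{m×n} above I_n), then A + BK = Z(I + Γ†Δ_Γ)G, where Γ† is the Moore–Penrose pseudoinverse of Γ. -/

import Mathlib

open Matrix

lemma isUnit_of_rank_eq_card {k : ℕ} (M : Matrix (Fin k) (Fin k) ℝ)
    (h : M.rank = k) : IsUnit M := by
  rw [← Matrix.mulVec_surjective_iff_isUnit]
  have : LinearMap.range M.mulVecLin = ⊤ := by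
    apply Submodule.eq_top_of_finrank_eq
    rw [show Module.finrank ℝ (LinearMap.range M.mulVecLin) = M.rank from rfl, h]
    simp [Module.finrank_fintype_fun_eq_card]
  intro v
  have hv : v ∈ LinearMap.range M.mulVecLin := this ▸ Submodule.mem_top
  obtain ⟨y, hy⟩ := hv
  exact ⟨y, hy⟩

/-- If `Z = [B A]Γ` with `Γ` full row rank, `Γ_Δ = Γ + Δ_Γ`, and `G` satisfies
`Γ_Δ G = [Kᵀ I]ᵀ`, then `A + BK = Z(I + Γ†Δ_Γ)G` with `Γ† = Γᵀ(ΓΓᵀ)⁻¹`. -/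
theorem stmt_10 {n m T : ℕ}
    (A : Matrix (Fin n) (Fin n) ℝ) (B : Matrix (Fin n) (Fin m) ℝ)
    (Γ ΔΓ : Matrix (Fin m ⊕ Fin n) (Fin T) ℝ)
    (hrank : Γ.rank = m + n)
    (G : Matrix (Fin T) (Fin n) ℝ) (K : Matrix (Fin m) (Fin n) ℝ)
    (hG : (Γ + ΔΓ) * G = Matrix.fromRows K (1 : Matrix (Fin n) (Fin n) ℝ)) :
    A + B * K = Matrix.fromCols B A * Γ * (1 + Γᵀ * (Γ * Γᵀ)⁻¹ * ΔΓ) * G := by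
  have hu : IsUnit (Γ * Γᵀ) := by
    have hre : (Γ * Γᵀ).rank = m + n := by
      rw [Matrix.rank_self_mul_transpose, hrank]
    have := isUnit_of_rank_eq_card ((Matrix.reindex (finSumFinEquiv) (finSumFinEquiv)) (Γ * Γᵀ))
      (by rw [Matrix.rank_reindex, hre])
    rwa [Matrix.reindex_apply, Matrix.isUnit_submatrix_equiv] at this
  have hinv : Γ * Γᵀ * (Γ * Γᵀ)⁻¹ = 1 := Matrix.mul_nonsing_inv _ (Matrix.isUnit_iff_isUnit_det _ |>.mp hu)
  have key : Matrix.fromCols B A * Γ * (1 + Γᵀ * (Γ * Γᵀ)⁻¹ * ΔΓ) * G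
      = Matrix.fromCols B A * ((Γ + ΔΓ) * G) := by
    have : Γ * (1 + Γᵀ * (Γ * Γᵀ)⁻¹ * ΔΓ) = Γ + ΔΓ := by
      rw [Matrix.mul_add, Matrix.mul_one]
      congr 1
      rw [← Matrix.mul_assoc, ← Matrix.mul_assoc, hinv, Matrix.one_mul]
    rw [Matrix.mul_assoc (Matrix.fromCols B A), this, Matrix.mul_assoc]
  rw [key, hG, Matrix.fromCols_mul_fromRows, Matrix.mul_one, add_comm]
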